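/- Each of the topologies Z^T, Z and Z^S on Minkowski space is first countable: for every point x ∈ M, the neighbourhood filter of x in each of these topologies admits a countable basis (given by the basic sets centred at x with radii 1/n). -/

import Mathlib

noncomputable section

open TopologicalSpace Filter

/-- Minkowski space `M = ℝ × ℝ³`. -/
abbrev Mink : Type := ℝ × EuclideanSpace ℝ (Fin 3)

/-- The Euclidean (product) topology on `M`. -/
def TE : TopologicalSpace Mink := inferInstance

/-- Time difference Δt(x,y). -/
def dtime (x y : Mink) : ℝ := y.1 - x.1

/-- Spatial distance Δr(x,y). -/
def dspace (x y : Mink) : ℝ := ‖y.2 - x.2‖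

/-- Chronological order `x ≪ y`. -/
def Chron (x y : Mink) : Prop := dspace x y < dtime x y

/-- Causal order `x ≺ y`. -/
def Causal (x y : Mink) : Prop := dspace x y ≤ dtime x y

/-- Euclidean open ball of radius ε about x. -/
def eball (x : Mink) (ε : ℝ) : Set Mink :=
  {y | Real.sqrt ((y.1 - x.1) ^ 2 + ‖y.2 - x.2‖ ^ 2) < ε}

/-- Time cone `C^T(x)`. -/
def timeCone (x : Mink) : Set Mink := {x} ∪ {y | Chron x y ∨ Chron y x}

/-- Space cone `C^S(x)`. -/
def spaceCone (x : Mink) : Set Mink := {x} ∪ {y | |dtime x y| < dspace x y}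

/-- Light cone `C^L(x)`. -/
def lightCone (x : Mink) : Set Mink := {y | y ≠ x ∧ |dtime x y| = dspace x y}

/-- Causal cone `C^J(x)`. -/
def causalCone (x : Mink) : Set Mink := {x} ∪ {y | Causal x y ∨ Causal y x}

/-- Closed space cone `K^S(x)` (space cone together with the light cone). -/
def closedSpaceCone (x : Mink) : Set Mink := {x} ∪ {y | |dtime x y| ≤ dspace x y}

/-- Bounded time cones, the defining family of `Z^T`. -/
def BasisT : Set (Set Mink) := {S | ∃ x ε, 0 < ε ∧ S = timeCone x ∩ eball x ε}

/-- Bounded space cones, the defining family of `Z^S`. -/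
def BasisS : Set (Set Mink) := {S | ∃ x ε, 0 < ε ∧ S = spaceCone x ∩ eball x ε}

/-- Balls with the light cone of the centre removed, the defining family of `Z`. -/
def BasisZ : Set (Set Mink) := {S | ∃ x ε, 0 < ε ∧ S = eball x ε \ lightCone x}

/-- Zeeman's topology `Z^T` (the Minkowski analogue of the path topology). -/
def ZT : TopologicalSpace Mink := TopologicalSpace.generateFrom BasisT

/-- The topology `Z^S`. -/
def ZS : TopologicalSpace Mink := TopologicalSpace.generateFrom BasisS

/-- The topology `Z`. -/
def Ztop : TopologicalSpace Mink := TopologicalSpace.generateFrom BasisZ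

def Jplus (x : Mink) : Set Mink := {y | Causal x y}
def Jminus (x : Mink) : Set Mink := {y | Causal y x}
def Nplus (x : Mink) : Set Mink := {y | y ≠ x ∧ dtime x y = dspace x y}
def Nminus (x : Mink) : Set Mink := {y | y ≠ x ∧ -dtime x y = dspace x y}

/-- The interval topology `T^tc` whose subbasic open sets are time cones. -/
def Ttc : TopologicalSpace Mink :=
  TopologicalSpace.generateFrom {S | ∃ x, S = timeCone x}

/-- The interval topology `T^≪` of the irreflexive causal order. -/
def Tll : TopologicalSpace Mink :=
  TopologicalSpace.generateFrom
    ({S | ∃ x, S = Set.univ \ (Jplus x \ {x})} ∪ {S | ∃ x, S = Set.univ \ (Jminus x \ {x})})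

/-- The interval topology `T^→` of irreflexive horismos. -/
def Thor : TopologicalSpace Mink :=
  TopologicalSpace.generateFrom
    ({S | ∃ x, S = Set.univ \ Nplus x} ∪ {S | ∃ x, S = Set.univ \ Nminus x})

/-- The topology `(Z^T)′` generated by bounded causal cones. -/
def ZT' : TopologicalSpace Mink :=
  TopologicalSpace.generateFrom {S | ∃ x ε, 0 < ε ∧ S = causalCone x ∩ eball x ε}

/-- The topology `(Z^S)′` generated by bounded closed space cones. -/
def ZS' : TopologicalSpace Mink :=
  TopologicalSpace.generateFrom {S | ∃ x ε, 0 < ε ∧ S = closedSpaceCone x ∩ eball x ε}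

/-- The topology `(T^tc)′` generated by causal cones. -/
def Ttc' : TopologicalSpace Mink :=
  TopologicalSpace.generateFrom {S | ∃ x, S = causalCone x}

/-- The topology `(T^≪)′` generated by closed space cones. -/
def Tll' : TopologicalSpace Mink :=
  TopologicalSpace.generateFrom {S | ∃ x, S = closedSpaceCone x}

/-- An endless causal curve. -/
def EndlessCausalCurve (γ : ℝ → Mink) : Prop :=
  Continuous γ ∧ (∀ s t : ℝ, s < t → Causal (γ s) (γ t) ∧ γ s ≠ γ t) ∧
    (∀ c : ℝ, ∃ t, c < (γ t).1) ∧ (∀ c : ℝ, ∃ t, (γ t).1 < c)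

/-- `γ` is a `T`-limit curve of the sequence `γs` of curves. -/
def IsLimitCurve (T : TopologicalSpace Mink) (γ : ℝ → Mink) (γs : ℕ → ℝ → Mink) : Prop :=
  ∃ nk : ℕ → ℕ, StrictMono nk ∧
    ∀ p ∈ Set.range γ, ∃ pk : ℕ → Mink,
      (∀ k, pk k ∈ Set.range (γs (nk k))) ∧ Filter.Tendsto pk Filter.atTop (@nhds Mink T p)

/-! ### Auxiliary lemmas -/

/-- The canonical distance used by `eball`. -/
def dE (x y : Mink) : ℝ := Real.sqrt ((y.1 - x.1) ^ 2 + ‖y.2 - x.2‖ ^ 2)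

lemma mem_eball_iff {x y : Mink} {ε : ℝ} : y ∈ eball x ε ↔ dE x y < ε := Iff.rfl

lemma dE_self (x : Mink) : dE x x = 0 := by simp [dE]

lemma mem_eball_self {x : Mink} {ε : ℝ} (hε : 0 < ε) : x ∈ eball x ε := by
  simpa [mem_eball_iff, dE_self] using hε

lemma abs_dtime_le_dE (x y : Mink) : |dtime x y| ≤ dE x y := by
  rw [dtime, ← Real.sqrt_sq_eq_abs]
  exact Real.sqrt_le_sqrt (le_add_of_nonneg_right (by positivity))

lemma dspace_le_dE (x y : Mink) : dspace x y ≤ dE x y := by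
  rw [dspace, ← Real.sqrt_sq (norm_nonneg (y.2 - x.2))]
  exact Real.sqrt_le_sqrt (le_add_of_nonneg_left (by positivity))

lemma abs_dtime_lt_of_mem {x y : Mink} {ε : ℝ} (h : y ∈ eball x ε) : |dtime x y| < ε :=
  lt_of_le_of_lt (abs_dtime_le_dE x y) h

lemma dspace_lt_of_mem {x y : Mink} {ε : ℝ} (h : y ∈ eball x ε) : dspace x y < ε :=
  lt_of_le_of_lt (dspace_le_dE x y) h

lemma dtime_add (x y z : Mink) : dtime x z = dtime x y + dtime y z := by
  simp only [dtime]; ring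

lemma dspace_comm (x y : Mink) : dspace x y = dspace y x := norm_sub_rev _ _

lemma dspace_triangle (x y z : Mink) : dspace x z ≤ dspace x y + dspace y z := by
  have h : z.2 - x.2 = (y.2 - x.2) + (z.2 - y.2) := by abel
  rw [dspace, dspace, dspace, h]
  exact norm_add_le _ _

lemma sqrt_two_triangle (a b c d : ℝ) (ha : 0 ≤ a) (hb : 0 ≤ b) (hc : 0 ≤ c) (hd : 0 ≤ d) :
    Real.sqrt ((a + c) ^ 2 + (b + d) ^ 2) ≤ Real.sqrt (a ^ 2 + b ^ 2) + Real.sqrt (c ^ 2 + d ^ 2) := by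
  set s := Real.sqrt (a ^ 2 + b ^ 2) with hs
  set t := Real.sqrt (c ^ 2 + d ^ 2) with ht
  have hs0 : 0 ≤ s := Real.sqrt_nonneg _
  have ht0 : 0 ≤ t := Real.sqrt_nonneg _
  have hs2 : s ^ 2 = a ^ 2 + b ^ 2 := Real.sq_sqrt (by positivity)
  have ht2 : t ^ 2 = c ^ 2 + d ^ 2 := Real.sq_sqrt (by positivity)
  have hst : a * c + b * d ≤ s * t := by
    rw [hs, ht, ← Real.sqrt_mul (by positivity)]
    rcases le_or_gt (a * c + b * d) 0 with h | h
    · exact h.trans (Real.sqrt_nonneg _)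
    · rw [show a * c + b * d = Real.sqrt ((a * c + b * d) ^ 2) from (Real.sqrt_sq h.le).symm]
      exact Real.sqrt_le_sqrt (by nlinarith [sq_nonneg (a * d - b * c)])
  calc Real.sqrt ((a + c) ^ 2 + (b + d) ^ 2)
      ≤ Real.sqrt ((s + t) ^ 2) := Real.sqrt_le_sqrt (by nlinarith)
    _ = s + t := Real.sqrt_sq (by positivity)

lemma dE_triangle (x y z : Mink) : dE x z ≤ dE x y + dE y z := by
  have h1 : |z.1 - x.1| ≤ |y.1 - x.1| + |z.1 - y.1| := by
    calc |z.1 - x.1| = |(y.1 - x.1) + (z.1 - y.1)| := by ring_nf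
      _ ≤ _ := abs_add_le _ _
  have h2 : ‖z.2 - x.2‖ ≤ ‖y.2 - x.2‖ + ‖z.2 - y.2‖ := by
    calc ‖z.2 - x.2‖ = ‖(y.2 - x.2) + (z.2 - y.2)‖ := by rw [show (y.2 - x.2) + (z.2 - y.2) = z.2 - x.2 by abel]
      _ ≤ _ := norm_add_le _ _
  have step1 : dE x z ≤ Real.sqrt ((|y.1 - x.1| + |z.1 - y.1|) ^ 2 + (‖y.2 - x.2‖ + ‖z.2 - y.2‖) ^ 2) := by
    apply Real.sqrt_le_sqrt
    have hz1 : (z.1 - x.1) ^ 2 ≤ (|y.1 - x.1| + |z.1 - y.1|) ^ 2 := by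
      rw [← sq_abs (z.1 - x.1)]
      exact pow_le_pow_left₀ (abs_nonneg _) h1 2
    have hz2 : ‖z.2 - x.2‖ ^ 2 ≤ (‖y.2 - x.2‖ + ‖z.2 - y.2‖) ^ 2 := by
      exact pow_le_pow_left₀ (norm_nonneg _) h2 2
    linarith
  have step2 := sqrt_two_triangle |y.1 - x.1| ‖y.2 - x.2‖ |z.1 - y.1| ‖z.2 - y.2‖
    (abs_nonneg _) (norm_nonneg _) (abs_nonneg _) (norm_nonneg _)
  have e1 : Real.sqrt (|y.1 - x.1| ^ 2 + ‖y.2 - x.2‖ ^ 2) = dE x y := by rw [sq_abs]; rfl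
  have e2 : Real.sqrt (|z.1 - y.1| ^ 2 + ‖z.2 - y.2‖ ^ 2) = dE y z := by rw [sq_abs]; rfl
  calc dE x z ≤ _ := step1
    _ ≤ _ := step2
    _ = dE x y + dE y z := by rw [e1, e2]

lemma eball_mono {x : Mink} {δ ε : ℝ} (h : δ ≤ ε) : eball x δ ⊆ eball x ε :=
  fun _ hz => lt_of_lt_of_le hz h

lemma eball_subset {x y : Mink} {δ ε : ℝ} (h : dE x y + δ ≤ ε) : eball y δ ⊆ eball x ε := by
  intro z hz
  have h1 : dE y z < δ := hz
  have h2 := dE_triangle x y z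
  show dE x z < ε
  linarith

/-- Generic first-countability lemma for topologies generated from a family
with a shrinking system of basic neighbourhoods at `x`. -/
lemma hasBasis_gen (g : Set (Set Mink)) (x : Mink) (core : ℝ → Set Mink)
    (hmono : ∀ ⦃a b : ℝ⦄, a ≤ b → core a ⊆ core b)
    (hg : ∀ ε : ℝ, 0 < ε → core ε ∈ g)
    (hx : ∀ ε : ℝ, 0 < ε → x ∈ core ε)
    (hsub : ∀ s ∈ g, x ∈ s → ∃ δ, 0 < δ ∧ core δ ⊆ s) :
    (@nhds Mink (TopologicalSpace.generateFrom g) x).HasBasis (fun n : ℕ => 0 < n)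
      (fun n : ℕ => core (1 / (n : ℝ))) := by
  have key : ∀ U : Set Mink, TopologicalSpace.GenerateOpen g U → x ∈ U →
      ∃ δ, 0 < δ ∧ core δ ⊆ U := by
    intro U hU
    induction hU with
    | basic s hs => exact fun hxs => hsub s hs hxs
    | univ => exact fun _ => ⟨1, one_pos, Set.subset_univ _⟩
    | inter U V _ _ ihU ihV =>
      intro hx'
      obtain ⟨δ1, hδ1, h1⟩ := ihU hx'.1
      obtain ⟨δ2, hδ2, h2⟩ := ihV hx'.2
      exact ⟨min δ1 δ2, lt_min hδ1 hδ2,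
        Set.subset_inter ((hmono (min_le_left _ _)).trans h1)
          ((hmono (min_le_right _ _)).trans h2)⟩
    | sUnion S _ ih =>
      intro hx'
      obtain ⟨t, ht, hxt⟩ := hx'
      obtain ⟨δ, hδ, hδs⟩ := ih t ht hxt
      exact ⟨δ, hδ, hδs.trans (Set.subset_sUnion_of_mem ht)⟩
  constructor
  intro S
  constructor
  · intro hS
    obtain ⟨U, hUS, hUopen, hxU⟩ :=
      (@mem_nhds_iff Mink (TopologicalSpace.generateFrom g) _ _).1 hS
    obtain ⟨δ, hδ, hδU⟩ := key U hUopen hxU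
    obtain ⟨n, hn⟩ := exists_nat_one_div_lt hδ
    refine ⟨n + 1, n.succ_pos, ?_⟩
    have : (((n : ℝ)) + 1) = ((n + 1 : ℕ) : ℝ) := by push_cast; ring
    rw [← this]
    exact (hmono hn.le).trans (hδU.trans hUS)
  · rintro ⟨n, hn, hsubS⟩
    have hpos : (0 : ℝ) < 1 / (n : ℝ) := by
      have : (0 : ℝ) < (n : ℝ) := by exact_mod_cast hn
      positivity
    exact (@mem_nhds_iff Mink (TopologicalSpace.generateFrom g) _ _).2
      ⟨core (1 / (n : ℝ)), hsubS,
        TopologicalSpace.GenerateOpen.basic _ (hg _ hpos), hx _ hpos⟩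

lemma subT (x y : Mink) (ε : ℝ) (hx : x ∈ timeCone y ∩ eball y ε) :
    ∃ δ, 0 < δ ∧ timeCone x ∩ eball x δ ⊆ timeCone y ∩ eball y ε := by
  obtain ⟨hxc, hxb⟩ := hx
  have hdE : dE y x < ε := hxb
  have hball : ∀ {δ : ℝ}, δ ≤ ε - dE y x → eball x δ ⊆ eball y ε := by
    intro δ h
    exact eball_subset (by linarith)
  rcases hxc with hxy | hchron
  · rcases hxy with rfl
    refine ⟨ε - dE x x, by simpa [dE_self] using hdE, fun z hz => ⟨hz.1, hball le_rfl hz.2⟩⟩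
  · rcases hchron with h | h
    · -- Chron y x
      set c := dtime y x - dspace y x with hc
      have hcpos : 0 < c := by simpa [hc, sub_pos, Chron] using h
      refine ⟨min (c / 2) (ε - dE y x), lt_min (by linarith) (by linarith),
        fun z hz => ?_⟩
      have hz' := hz.2
      have h1 : |dtime x z| < c / 2 := lt_of_lt_of_le (abs_dtime_lt_of_mem hz') (min_le_left _ _)
      have h2 : dspace x z < c / 2 := lt_of_lt_of_le (dspace_lt_of_mem hz') (min_le_left _ _)
      have ht := dtime_add y x z
      have hsp := dspace_triangle y x z
      have habs := abs_lt.1 h1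
      refine ⟨Or.inr (Or.inl ?_), hball (min_le_right _ _) hz'⟩
      show dspace y z < dtime y z
      rw [ht]
      linarith
    · -- Chron x y
      set c := dtime x y - dspace x y with hc
      have hcpos : 0 < c := by simpa [hc, sub_pos, Chron] using h
      refine ⟨min (c / 2) (ε - dE y x), lt_min (by linarith) (by linarith),
        fun z hz => ?_⟩
      have hz' := hz.2
      have h1 : |dtime x z| < c / 2 := lt_of_lt_of_le (abs_dtime_lt_of_mem hz') (min_le_left _ _)
      have h2 : dspace x z < c / 2 := lt_of_lt_of_le (dspace_lt_of_mem hz') (min_le_left _ _)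
      have ht : dtime z y = dtime x y - dtime x z := by simp only [dtime]; ring
      have hsp : dspace z y ≤ dspace z x + dspace x y := dspace_triangle z x y
      have hzx : dspace z x = dspace x z := dspace_comm z x
      have habs := abs_lt.1 h1
      refine ⟨Or.inr (Or.inr ?_), hball (min_le_right _ _) hz'⟩
      show dspace z y < dtime z y
      rw [ht]
      linarith

lemma subS (x y : Mink) (ε : ℝ) (hx : x ∈ spaceCone y ∩ eball y ε) :
    ∃ δ, 0 < δ ∧ spaceCone x ∩ eball x δ ⊆ spaceCone y ∩ eball y ε := by
  obtain ⟨hxc, hxb⟩ := hx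
  have hdE : dE y x < ε := hxb
  have hball : ∀ {δ : ℝ}, δ ≤ ε - dE y x → eball x δ ⊆ eball y ε := fun h =>
    eball_subset (by linarith)
  rcases hxc with hxy | h
  · rcases hxy with rfl
    exact ⟨ε - dE x x, by simpa [dE_self] using hdE,
      fun z hz => ⟨hz.1, hball le_rfl hz.2⟩⟩
  · set c := dspace y x - |dtime y x| with hc
    have hcpos : 0 < c := by simpa [hc, sub_pos] using h
    refine ⟨min (c / 2) (ε - dE y x), lt_min (by linarith) (by linarith), fun z hz => ?_⟩
    have hz' := hz.2
    have h1 : |dtime x z| < c / 2 := lt_of_lt_of_le (abs_dtime_lt_of_mem hz') (min_le_left _ _)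
    have h2 : dspace x z < c / 2 := lt_of_lt_of_le (dspace_lt_of_mem hz') (min_le_left _ _)
    have ht : dtime y z = dtime y x + dtime x z := dtime_add y x z
    have hta : |dtime y z| ≤ |dtime y x| + |dtime x z| := ht ▸ abs_add_le _ _
    have hsp : dspace y x ≤ dspace y z + dspace z x := dspace_triangle y z x
    have hzx : dspace z x = dspace x z := dspace_comm z x
    refine ⟨Or.inr ?_, hball (min_le_right _ _) hz'⟩
    show |dtime y z| < dspace y z
    linarith

lemma subZ (x y : Mink) (ε : ℝ) (hx : x ∈ eball y ε \ lightCone y) :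
    ∃ δ, 0 < δ ∧ eball x δ \ lightCone x ⊆ eball y ε \ lightCone y := by
  obtain ⟨hxb, hxn⟩ := hx
  have hdE : dE y x < ε := hxb
  have hball : ∀ {δ : ℝ}, δ ≤ ε - dE y x → eball x δ ⊆ eball y ε := fun h =>
    eball_subset (by linarith)
  by_cases hxy : x = y
  · subst hxy
    exact ⟨ε - dE x x, by simpa [dE_self] using hdE,
      fun z hz => ⟨hball le_rfl hz.1, hz.2⟩⟩
  · have hne : |dtime y x| ≠ dspace y x := fun hEq => hxn ⟨hxy, hEq⟩
    rcases lt_or_gt_of_ne hne with h | h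
    · set c := dspace y x - |dtime y x| with hc
      have hcpos : 0 < c := by simpa [hc, sub_pos] using h
      refine ⟨min (c / 2) (ε - dE y x), lt_min (by linarith) (by linarith), fun z hz =>
        ⟨hball (min_le_right _ _) hz.1, fun hzl => ?_⟩⟩
      have hz' := hz.1
      have h1 : |dtime x z| < c / 2 := lt_of_lt_of_le (abs_dtime_lt_of_mem hz') (min_le_left _ _)
      have h2 : dspace x z < c / 2 := lt_of_lt_of_le (dspace_lt_of_mem hz') (min_le_left _ _)
      have ht : dtime y z = dtime y x + dtime x z := dtime_add y x z
      have hta : |dtime y z| ≤ |dtime y x| + |dtime x z| := ht ▸ abs_add_le _ _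
      have hsp : dspace y x ≤ dspace y z + dspace z x := dspace_triangle y z x
      have hzx : dspace z x = dspace x z := dspace_comm z x
      have hlt : |dtime y z| < dspace y z := by linarith
      exact absurd hzl.2 hlt.ne
    · set c := |dtime y x| - dspace y x with hc
      have hcpos : 0 < c := by simpa [hc, sub_pos] using h
      refine ⟨min (c / 2) (ε - dE y x), lt_min (by linarith) (by linarith), fun z hz =>
        ⟨hball (min_le_right _ _) hz.1, fun hzl => ?_⟩⟩
      have hz' := hz.1
      have h1 : |dtime x z| < c / 2 := lt_of_lt_of_le (abs_dtime_lt_of_mem hz') (min_le_left _ _)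
      have h2 : dspace x z < c / 2 := lt_of_lt_of_le (dspace_lt_of_mem hz') (min_le_left _ _)
      have ht : dtime y z = dtime y x + dtime x z := dtime_add y x z
      have hta : |dtime y x| ≤ |dtime y z| + |dtime x z| := by
        have e : dtime y x = dtime y z - dtime x z := by rw [ht]; ring
        calc |dtime y x| = |dtime y z - dtime x z| := by rw [e]
          _ ≤ _ := abs_sub _ _
      have hsp : dspace y z ≤ dspace y x + dspace x z := by
        have h3 := dspace_triangle y x z
        linarith
      have hlt : dspace y z < |dtime y z| := by linarith
      exact absurd hzl.2 hlt.ne'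

/-- Each of `Z^T`, `Z`, `Z^S` is first countable: at every point the neighbourhood filter
has a countable basis given by the basic sets centred at that point with radii `1/n`. -/
theorem ZT_Z_ZS_first_countable (x : Mink) :
    (@nhds Mink ZT x).HasBasis (fun n : ℕ => 0 < n)
      (fun n : ℕ => timeCone x ∩ eball x (1 / (n : ℝ))) ∧
    (@nhds Mink Ztop x).HasBasis (fun n : ℕ => 0 < n)
      (fun n : ℕ => eball x (1 / (n : ℝ)) \ lightCone x) ∧
    (@nhds Mink ZS x).HasBasis (fun n : ℕ => 0 < n)
      (fun n : ℕ => spaceCone x ∩ eball x (1 / (n : ℝ))) := by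
  refine ⟨?_, ?_, ?_⟩
  · refine hasBasis_gen BasisT x (fun ε => timeCone x ∩ eball x ε)
      (fun a b h => Set.inter_subset_inter_right _ (eball_mono h))
      (fun ε hε => ⟨x, ε, hε, rfl⟩)
      (fun ε hε => ⟨Or.inl rfl, mem_eball_self hε⟩) ?_
    rintro s ⟨y, ε, hε, rfl⟩ hxs
    obtain ⟨δ, hδ, hsub⟩ := subT x y ε hxs
    exact ⟨δ, hδ, hsub⟩
  · refine hasBasis_gen BasisZ x (fun ε => eball x ε \ lightCone x)
      (fun a b h => Set.diff_subset_diff_left (eball_mono h))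
      (fun ε hε => ⟨x, ε, hε, rfl⟩)
      (fun ε hε => ⟨mem_eball_self hε, fun h => h.1 rfl⟩) ?_
    rintro s ⟨y, ε, hε, rfl⟩ hxs
    obtain ⟨δ, hδ, hsub⟩ := subZ x y ε hxs
    exact ⟨δ, hδ, hsub⟩
  · refine hasBasis_gen BasisS x (fun ε => spaceCone x ∩ eball x ε)
      (fun a b h => Set.inter_subset_inter_right _ (eball_mono h))
      (fun ε hε => ⟨x, ε, hε, rfl⟩)
      (fun ε hε => ⟨Or.inl rfl, mem_eball_self hε⟩) ?_
    rintro s ⟨y, ε, hε, rfl⟩ hxs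
    obtain ⟨δ, hδ, hsub⟩ := subS x y ε hxs
    exact ⟨δ, hδ, hsub⟩
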